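/- Let H ∈ (0,1) and B a real fBm. There exists a constant C (depending only on H) such that for all ε > 0 and all 0 ≤ s < t, |Cov(D⁰_ε B_t, D⁰_ε B_s)| ≤ C |t−s|^{2H−2}, where D⁰_ε B_t = (B_{t+ε} − B_{t−ε})/(2ε). -/

import Mathlib

open MeasureTheory Filter

/-- Covariance function of real fractional Brownian motion with Hurst index `H`. -/
noncomputable def fbmCov (H s t : ℝ) : ℝ :=
  (|s| ^ (2 * H) + |t| ^ (2 * H) - |s - t| ^ (2 * H)) / 2

/-- `B` is a (two-sided) real fractional Brownian motion with Hurst index `H`: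
a centered Gaussian process with covariance `fbmCov H`, characterized by its
finite-dimensional characteristic functions. -/
def IsFBM1 {Ω : Type*} [MeasurableSpace Ω] (H : ℝ) (P : MeasureTheory.Measure Ω)
    (B : ℝ → Ω → ℝ) : Prop :=
  ∀ (n : ℕ) (t : Fin n → ℝ) (c : Fin n → ℝ),
    ∫ ω, Complex.exp (Complex.I * ((∑ i, c i * B (t i) ω : ℝ) : ℂ)) ∂P =
      Complex.exp (-(((∑ i, ∑ i', c i * c i' * fbmCov H (t i) (t i') : ℝ) : ℂ)) / 2)

lemma integrable_exp_combo {Ω : Type*} [MeasurableSpace Ω] {P : Measure Ω} {H : ℝ}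
    {B : ℝ → Ω → ℝ} (hB : IsFBM1 H P B) (n : ℕ) (t c : Fin n → ℝ) :
    Integrable (fun ω => Complex.exp (Complex.I * ((∑ i, c i * B (t i) ω : ℝ) : ℂ))) P := by
  by_contra h
  have h2 := hB n t c
  rw [integral_undef h] at h2
  exact (Complex.exp_ne_zero _) h2.symm

lemma aemeasurable_B {Ω : Type*} [MeasurableSpace Ω] {P : Measure Ω} {H : ℝ}
    {B : ℝ → Ω → ℝ} (hB : IsFBM1 H P B) (r : ℝ) :
    AEMeasurable (fun ω => B r ω) P := by
  have h1 : AEStronglyMeasurable (fun ω => Complex.exp (Complex.I * ((B r ω : ℝ) : ℂ))) P := by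
    have := (integrable_exp_combo hB 1 (fun _ => r) (fun _ => 1)).aestronglyMeasurable
    simpa using this
  have h2 : AEStronglyMeasurable
      (fun ω => Complex.exp (Complex.I * ((Real.sqrt 2 * B r ω : ℝ) : ℂ))) P := by
    have := (integrable_exp_combo hB 1 (fun _ => r) (fun _ => Real.sqrt 2)).aestronglyMeasurable
    simpa using this
  set Φ : ℝ → ℂ × ℂ := fun y =>
    (Complex.exp (Complex.I * (y : ℂ)), Complex.exp (Complex.I * ((Real.sqrt 2 * y : ℝ) : ℂ)))
    with hΦ
  have hcont : Continuous Φ := by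
    apply Continuous.prodMk
    · exact Complex.continuous_exp.comp (continuous_const.mul Complex.continuous_ofReal)
    · exact Complex.continuous_exp.comp (continuous_const.mul
        (Complex.continuous_ofReal.comp (continuous_const.mul continuous_id)))
  have hinj : Function.Injective Φ := by
    intro p q hpq
    rw [Prod.ext_iff] at hpq
    obtain ⟨ha, hb⟩ := hpq
    rw [Complex.exp_eq_exp_iff_exists_int] at ha hb
    obtain ⟨n, hn⟩ := ha
    obtain ⟨m, hm⟩ := hb
    have hn' : p = q + n * (2 * Real.pi) := by
      have := congrArg Complex.im hn
      simpa [Complex.mul_im, Complex.add_im] using this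
    have hm' : Real.sqrt 2 * p = Real.sqrt 2 * q + m * (2 * Real.pi) := by
      have := congrArg Complex.im hm
      simpa [Complex.mul_im, Complex.add_im] using this
    have hpi : Real.pi ≠ 0 := Real.pi_ne_zero
    have hs2 : Real.sqrt 2 * n = m := by
      have h2pi : (2 * Real.pi) ≠ 0 := by positivity
      apply mul_right_cancel₀ h2pi
      rw [hn'] at hm'; ring_nf at hm' ⊢; linarith
    by_cases hn0 : (n:ℝ) = 0
    · rw [hn', hn0]; ring
    · exfalso
      have : Real.sqrt 2 = (m:ℝ) / (n:ℝ) := by field_simp [hn0] at hs2 ⊢; linarith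
      have hirr : Irrational (Real.sqrt 2) := irrational_sqrt_two
      rw [this] at hirr
      exact (Rat.not_irrational ((m:ℚ)/(n:ℚ))) (by push_cast at hirr ⊢; exact hirr)
  have hemb : MeasurableEmbedding Φ := hcont.measurableEmbedding hinj
  have hψ : Measurable (Function.extend Φ id fun _ => (0:ℝ)) :=
    hemb.measurable_extend measurable_id measurable_const
  have heq : (fun ω => B r ω) = fun ω => Function.extend Φ id (fun _ => (0:ℝ)) (Φ (B r ω)) := by
    funext ω; rw [hinj.extend_apply]; rfl
  rw [heq]
  exact hψ.comp_aemeasurable ((h1.aemeasurable).prodMk h2.aemeasurable)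

lemma one_sub_cos_eq (w : ℝ) : 1 - Real.cos w = 2 * Real.sin (w/2)^2 := by
  have h : Real.sin (w/2)^2 = (1 - Real.cos w)/2 := by
    rw [← sq_abs, Real.abs_sin_half, Real.sq_sqrt]
    have := Real.cos_le_one w; linarith
  linarith

lemma tendsto_sin_div : Tendsto (fun y : ℝ => Real.sin y / y) (nhdsWithin 0 {(0:ℝ)}ᶜ) (nhds 1) := by
  have h := hasDerivAt_iff_tendsto_slope.mp (Real.hasDerivAt_sin 0)
  have e : slope Real.sin 0 = fun y : ℝ => Real.sin y / y := by
    funext y; simp [slope_def_field]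
  rw [e] at h; simpa using h

lemma tendsto_cos_aux (z : ℝ) :
    Tendsto (fun u : ℝ => (1 - Real.cos (u * z))/u^2) (nhdsWithin 0 {(0:ℝ)}ᶜ) (nhds (z^2/2)) := by
  rcases eq_or_ne z 0 with rfl | hz
  · simpa using tendsto_const_nhds (α := ℝ) (x := (0:ℝ)) (f := nhdsWithin 0 {(0:ℝ)}ᶜ)
  · have hmap : Tendsto (fun u : ℝ => u * z / 2) (nhdsWithin 0 {(0:ℝ)}ᶜ)
        (nhdsWithin 0 {(0:ℝ)}ᶜ) := by
      apply tendsto_nhdsWithin_of_tendsto_nhds_of_eventually_within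
      · have : Tendsto (fun u : ℝ => u * z / 2) (nhds 0) (nhds 0) := by
          have h := Continuous.tendsto (f := fun u : ℝ => u * z / 2) (by continuity) 0
          simpa using h
        exact this.mono_left nhdsWithin_le_nhds
      · filter_upwards [self_mem_nhdsWithin] with u hu
        simp only [Set.mem_compl_iff, Set.mem_singleton_iff] at hu ⊢
        positivity
    have hcomp := tendsto_sin_div.comp hmap
    have hlim : Tendsto (fun u : ℝ => z^2/2 * (Real.sin (u*z/2) / (u*z/2))^2)
        (nhdsWithin 0 {(0:ℝ)}ᶜ) (nhds (z^2/2)) := by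
      have := (tendsto_const_nhds (x := z^2/2) (f := nhdsWithin 0 {(0:ℝ)}ᶜ)).mul (hcomp.pow 2)
      simpa using this
    apply hlim.congr'
    filter_upwards [self_mem_nhdsWithin] with u hu
    simp only [Set.mem_compl_iff, Set.mem_singleton_iff] at hu
    rw [one_sub_cos_eq (u*z)]
    have h2 : u * z / 2 ≠ 0 := by positivity
    field_simp

lemma tendsto_exp_aux (q : ℝ) :
    Tendsto (fun u : ℝ => (1 - Real.exp (-(u^2*q)/2))/u^2) (nhdsWithin 0 {(0:ℝ)}ᶜ)
      (nhds (q/2)) := by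
  have hg : HasDerivAt (fun v : ℝ => 1 - Real.exp (-(v*q)/2)) (q/2) 0 := by
    have hlin : HasDerivAt (fun v : ℝ => -(v*q)/2) (-q/2) 0 := by
      simpa using (((hasDerivAt_id (0:ℝ)).mul_const q).neg.div_const 2)
    have hexp := (Real.hasDerivAt_exp (-(0*q)/2)).comp 0 hlin
    have := hexp.const_sub 1
    simpa [neg_div] using this
  have hslope := hasDerivAt_iff_tendsto_slope.mp hg
  have hmap : Tendsto (fun u : ℝ => u^2) (nhdsWithin 0 {(0:ℝ)}ᶜ)
      (nhdsWithin 0 {(0:ℝ)}ᶜ) := by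
    apply tendsto_nhdsWithin_of_tendsto_nhds_of_eventually_within
    · have : Tendsto (fun u : ℝ => u^2) (nhds 0) (nhds 0) := by
        have := (continuous_pow 2).tendsto (0:ℝ); simpa using this
      exact this.mono_left nhdsWithin_le_nhds
    · filter_upwards [self_mem_nhdsWithin] with u hu
      simp only [Set.mem_compl_iff, Set.mem_singleton_iff] at hu ⊢
      positivity
  have hcomp := hslope.comp hmap
  apply hcomp.congr'
  filter_upwards [self_mem_nhdsWithin] with u hu
  simp only [Set.mem_compl_iff, Set.mem_singleton_iff] at hu
  simp [Function.comp, slope_def_field]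

lemma tendsto_seq : Tendsto (fun k : ℕ => 1/((k:ℝ)+1)) atTop (nhdsWithin 0 {(0:ℝ)}ᶜ) := by
  apply tendsto_nhdsWithin_of_tendsto_nhds_of_eventually_within
  · exact tendsto_one_div_add_atTop_nhds_zero_nat
  · filter_upwards with k
    simp only [Set.mem_compl_iff, Set.mem_singleton_iff]
    positivity

lemma sq_moment {Ω : Type*} [MeasurableSpace Ω] {P : Measure Ω} [IsProbabilityMeasure P] {H : ℝ}
    {B : ℝ → Ω → ℝ} (hB : IsFBM1 H P B) (n : ℕ) (t c : Fin n → ℝ) :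
    Integrable (fun ω => (∑ i, c i * B (t i) ω)^2) P ∧
    ∫ ω, (∑ i, c i * B (t i) ω)^2 ∂P = ∑ i, ∑ i', c i * c i' * fbmCov H (t i) (t i') := by
  set Z : Ω → ℝ := fun ω => ∑ i, c i * B (t i) ω with hZdef
  set Q : ℝ := ∑ i, ∑ i', c i * c i' * fbmCov H (t i) (t i') with hQdef
  have hZm : AEMeasurable Z P :=
    Finset.aemeasurable_fun_sum _ (fun i _ => (aemeasurable_B hB (t i)).const_mul (c i))
  have hcos : ∀ v : ℝ, (∫ ω, Real.cos (v * Z ω) ∂P = Real.exp (-(v^2 * Q)/2)) ∧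
      Integrable (fun ω => Real.cos (v * Z ω)) P := by
    intro v
    have h := hB n t (fun i => v * c i)
    have hint := integrable_exp_combo hB n t (fun i => v * c i)
    have e1 : ∀ ω, (∑ i, v * c i * B (t i) ω) = v * Z ω := fun ω => by
      rw [hZdef]; simp only; rw [Finset.mul_sum]
      exact Finset.sum_congr rfl fun i _ => by ring
    have e2 : (∑ i, ∑ i', v * c i * (v * c i') * fbmCov H (t i) (t i')) = v^2 * Q := by
      rw [hQdef, Finset.mul_sum]
      refine Finset.sum_congr rfl fun i _ => ?_
      rw [Finset.mul_sum]
      exact Finset.sum_congr rfl fun j _ => by ring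
    simp only [e1, e2] at h hint
    have harg : (-(((v^2*Q : ℝ)) : ℂ)/2) = (((-(v^2*Q)/2 : ℝ)) : ℂ) := by push_cast; ring
    rw [harg] at h
    have hre : ∀ ω : Ω, RCLike.re (Complex.exp (Complex.I * ((v * Z ω : ℝ) : ℂ)))
        = Real.cos (v * Z ω) := fun ω => by
      rw [RCLike.re_to_complex, mul_comm, Complex.exp_ofReal_mul_I_re]
    constructor
    · calc ∫ ω, Real.cos (v * Z ω) ∂P
          = ∫ ω, RCLike.re (Complex.exp (Complex.I * ((v * Z ω : ℝ) : ℂ))) ∂P :=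
            integral_congr_ae (ae_of_all _ fun ω => (hre ω).symm)
        _ = RCLike.re (∫ ω, Complex.exp (Complex.I * ((v * Z ω : ℝ) : ℂ)) ∂P) :=
            integral_re hint
        _ = RCLike.re (Complex.exp (((-(v^2*Q)/2 : ℝ)) : ℂ)) := by rw [h]
        _ = Real.exp (-(v^2*Q)/2) := by rw [RCLike.re_to_complex, Complex.exp_ofReal_re]
    · exact hint.re.congr (ae_of_all _ fun ω => hre ω)
  have hcosInt : ∀ v : ℝ, Integrable (fun ω => (1 - Real.cos (v * Z ω))/v^2) P := fun v =>
    (((integrable_const 1).sub (hcos v).2).div_const _)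
  have hIval : ∀ v : ℝ, ∫ ω, (1 - Real.cos (v * Z ω))/v^2 ∂P
      = (1 - Real.exp (-(v^2 * Q)/2))/v^2 := by
    intro v
    rw [integral_div, integral_sub (integrable_const 1) (hcos v).2, integral_const, (hcos v).1]
    simp [measure_univ]
  have hupos : ∀ k : ℕ, (0:ℝ) < 1/((k:ℝ)+1) := fun k => by positivity
  have hptw : ∀ ω, Tendsto (fun k : ℕ => (1 - Real.cos ((1/((k:ℝ)+1)) * Z ω))/(1/((k:ℝ)+1))^2)
      atTop (nhds ((Z ω)^2/2)) := fun ω => (tendsto_cos_aux (Z ω)).comp tendsto_seq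
  have hIlim : Tendsto (fun k : ℕ => (1 - Real.exp (-((1/((k:ℝ)+1))^2 * Q)/2))/(1/((k:ℝ)+1))^2)
      atTop (nhds (Q/2)) := (tendsto_exp_aux Q).comp tendsto_seq
  have hmeasf : ∀ k : ℕ, AEMeasurable
      (fun ω => ENNReal.ofReal ((1 - Real.cos ((1/((k:ℝ)+1)) * Z ω))/(1/((k:ℝ)+1))^2)) P :=
    fun k => ENNReal.measurable_ofReal.comp_aemeasurable
      (((aemeasurable_const.sub
        (Real.measurable_cos.comp_aemeasurable (hZm.const_mul _))).div_const _))
  have hnonneg : ∀ (v : ℝ) ω, 0 ≤ (1 - Real.cos (v * Z ω))/v^2 := fun v ω =>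
    div_nonneg (by linarith [Real.cos_le_one (v * Z ω)]) (sq_nonneg _)
  have hlint : ∀ k : ℕ, ∫⁻ ω, ENNReal.ofReal ((1 - Real.cos ((1/((k:ℝ)+1)) * Z ω))/(1/((k:ℝ)+1))^2) ∂P
      = ENNReal.ofReal ((1 - Real.exp (-((1/((k:ℝ)+1))^2 * Q)/2))/(1/((k:ℝ)+1))^2) := by
    intro k
    rw [← ofReal_integral_eq_lintegral_ofReal (hcosInt _) (ae_of_all _ (hnonneg _)), hIval]
  have hfatou := lintegral_liminf_le' (u := atTop) hmeasf
  have hlhs : (fun ω => Filter.liminf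
      (fun k : ℕ => ENNReal.ofReal ((1 - Real.cos ((1/((k:ℝ)+1)) * Z ω))/(1/((k:ℝ)+1))^2)) atTop)
      = fun ω => ENNReal.ofReal ((Z ω)^2/2) := by
    funext ω
    exact ((ENNReal.continuous_ofReal.tendsto _).comp (hptw ω)).liminf_eq
  rw [hlhs] at hfatou
  have hrhs : Filter.liminf (fun k : ℕ =>
      ∫⁻ ω, ENNReal.ofReal ((1 - Real.cos ((1/((k:ℝ)+1)) * Z ω))/(1/((k:ℝ)+1))^2) ∂P) atTop
      = ENNReal.ofReal (Q/2) := by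
    have h2 : Tendsto (fun k : ℕ =>
        ∫⁻ ω, ENNReal.ofReal ((1 - Real.cos ((1/((k:ℝ)+1)) * Z ω))/(1/((k:ℝ)+1))^2) ∂P) atTop
        (nhds (ENNReal.ofReal (Q/2))) := by
      simp only [hlint]
      exact (ENNReal.continuous_ofReal.tendsto _).comp hIlim
    exact h2.liminf_eq
  rw [hrhs] at hfatou
  have hZsqInt : Integrable (fun ω => (Z ω)^2) P := by
    refine ⟨(hZm.pow_const 2).aestronglyMeasurable, ?_⟩
    rw [hasFiniteIntegral_iff_ofReal (ae_of_all _ fun ω => sq_nonneg _)]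
    have heq2 : ∀ ω : Ω, ENNReal.ofReal ((Z ω)^2) = 2 * ENNReal.ofReal ((Z ω)^2/2) := by
      intro ω
      rw [show (Z ω)^2 = 2*((Z ω)^2/2) by ring,
        ENNReal.ofReal_mul (by norm_num : (0:ℝ) ≤ 2)]
      norm_num
    simp only [heq2]
    rw [lintegral_const_mul' _ _ (by norm_num : (2:ENNReal) ≠ ⊤)]
    refine lt_of_le_of_lt (mul_le_mul_right hfatou 2) ?_
    exact ENNReal.mul_lt_top (by norm_num) ENNReal.ofReal_lt_top
  have hbound : ∀ k : ℕ, ∀ᵐ ω ∂P,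
      ‖(1 - Real.cos ((1/((k:ℝ)+1)) * Z ω))/(1/((k:ℝ)+1))^2‖ ≤ (Z ω)^2/2 := by
    intro k
    filter_upwards with ω
    set v : ℝ := 1/((k:ℝ)+1) with hv
    have hk := hupos k
    have h1 : 1 - Real.cos (v * Z ω) ≤ (v * Z ω)^2/2 := by
      have := Real.one_sub_sq_div_two_le_cos (x := v * Z ω); linarith
    rw [Real.norm_eq_abs, abs_of_nonneg (hnonneg v ω), div_le_iff₀ (by positivity)]
    have h2 : (v * Z ω)^2/2 = (Z ω)^2/2 * v^2 := by ring
    linarith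
  have hDCT := tendsto_integral_of_dominated_convergence (μ := P)
      (F := fun (k : ℕ) ω => (1 - Real.cos ((1/((k:ℝ)+1)) * Z ω))/(1/((k:ℝ)+1))^2)
      (f := fun ω => (Z ω)^2/2) (fun ω => (Z ω)^2/2)
      (fun k => (hcosInt _).aestronglyMeasurable) (hZsqInt.div_const 2) hbound
      (ae_of_all _ hptw)
  have hIseq : (fun k : ℕ => ∫ ω, (1 - Real.cos ((1/((k:ℝ)+1)) * Z ω))/(1/((k:ℝ)+1))^2 ∂P)
      = fun k : ℕ => (1 - Real.exp (-((1/((k:ℝ)+1))^2 * Q)/2))/(1/((k:ℝ)+1))^2 :=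
    funext fun k => hIval _
  rw [hIseq] at hDCT
  have huniq := tendsto_nhds_unique hDCT hIlim
  refine ⟨hZsqInt, ?_⟩
  have hdiv : ∫ ω, (Z ω)^2/2 ∂P = (∫ ω, (Z ω)^2 ∂P)/2 := integral_div 2 _
  rw [hdiv] at huniq
  linarith

lemma key_analytic {a : ℝ} (ha0 : 0 < a) (ha2 : a ≤ 2) {x : ℝ} (hx : 0 < x) :
    |(1+x) ^ a + |1-x| ^ a - 2| ≤ 26 * x ^ 2 := by
  rcases le_or_gt (1/2) x with hx2 | hx2
  · have hb : |1 - x| ^ a ≤ (1+x) ^ a := by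
      apply Real.rpow_le_rpow (abs_nonneg _) _ ha0.le
      rw [abs_le]; constructor <;> linarith
    have h2 : (1+x) ^ a ≤ 9 * x^2 := by
      calc (1+x) ^ a ≤ (3*x) ^ a :=
            Real.rpow_le_rpow (by linarith) (by linarith) ha0.le
        _ ≤ (3*x) ^ (2:ℝ) := Real.rpow_le_rpow_of_exponent_le (by linarith) ha2
        _ = 9 * x^2 := by rw [Real.rpow_two]; ring
    have hnn : (0:ℝ) ≤ |1-x| ^ a := Real.rpow_nonneg (abs_nonneg _) _
    rw [abs_le]; constructor <;> nlinarith
  · have hd1 : ∀ y ∈ Set.Icc (0:ℝ) (1/2),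
        HasDerivAt (fun y => (1+y)^a + (1-y)^a - 2)
          (a * (1+y)^(a-1) - a * (1-y)^(a-1)) y := by
      intro y hy
      obtain ⟨hy0, hy1⟩ := hy
      have hp : HasDerivAt (fun y : ℝ => (1+y)^a) (a * (1+y)^(a-1)) y := by
        have h := (Real.hasDerivAt_rpow_const (x := 1+y) (p := a)
          (Or.inl (by linarith))).comp y ((hasDerivAt_id y).const_add 1)
        simpa [Function.comp_def] using h
      have hm : HasDerivAt (fun y : ℝ => (1-y)^a) (-(a * (1-y)^(a-1))) y := by
        have h := (Real.hasDerivAt_rpow_const (x := 1-y) (p := a)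
          (Or.inl (by linarith))).comp y ((hasDerivAt_id y).const_sub 1)
        simpa [Function.comp_def] using h
      simpa [sub_eq_add_neg] using ((hp.add hm).sub_const 2)
    have hd2 : ∀ y ∈ Set.Icc (0:ℝ) (1/2),
        HasDerivAt (fun y => a * (1+y)^(a-1) - a * (1-y)^(a-1))
          (a*((a-1) * (1+y)^(a-2)) + a*((a-1) * (1-y)^(a-2))) y := by
      intro y hy
      obtain ⟨hy0, hy1⟩ := hy
      have hp : HasDerivAt (fun y : ℝ => (1+y)^(a-1)) ((a-1) * (1+y)^(a-2)) y := by
        have h := (Real.hasDerivAt_rpow_const (x := 1+y) (p := a-1)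
          (Or.inl (by linarith))).comp y ((hasDerivAt_id y).const_add 1)
        simpa [Function.comp_def, show a - 1 - 1 = a - 2 by ring] using h
      have hm : HasDerivAt (fun y : ℝ => (1-y)^(a-1)) (-((a-1) * (1-y)^(a-2))) y := by
        have h := (Real.hasDerivAt_rpow_const (x := 1-y) (p := a-1)
          (Or.inl (by linarith))).comp y ((hasDerivAt_id y).const_sub 1)
        simpa [Function.comp_def, show a - 1 - 1 = a - 2 by ring] using h
      have h := (hp.const_mul a).sub (hm.const_mul a)
      simpa [mul_neg, sub_neg_eq_add, Pi.sub_def] using h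
    have hbound'' : ∀ y ∈ Set.Icc (0:ℝ) (1/2),
        ‖a*((a-1) * (1+y)^(a-2)) + a*((a-1) * (1-y)^(a-2))‖ ≤ 10 := by
      intro y hy
      obtain ⟨hy0, hy1⟩ := hy
      have e1 : (1+y)^(a-2) ≤ 1 :=
        Real.rpow_le_one_of_one_le_of_nonpos (by linarith) (by linarith)
      have e1' : (0:ℝ) ≤ (1+y)^(a-2) := Real.rpow_nonneg (by linarith) _
      have e2 : (1-y)^(a-2) ≤ 4 := by
        have s1 : (1-y)^(a-2) ≤ (1/2:ℝ)^(a-2) :=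
          Real.rpow_le_rpow_of_nonpos (by norm_num) (by linarith) (by linarith)
        have s2 : (1/2:ℝ)^(a-2) ≤ (1/2:ℝ)^(-2:ℝ) :=
          Real.rpow_le_rpow_of_exponent_ge (by norm_num) (by norm_num) (by linarith)
        have s3 : (1/2:ℝ)^(-2:ℝ) = 4 := by
          rw [show (-2:ℝ) = ((-2:ℤ):ℝ) by norm_num, Real.rpow_intCast]; norm_num
        linarith
      have e2' : (0:ℝ) ≤ (1-y)^(a-2) := Real.rpow_nonneg (by linarith) _
      have h1 : |a| ≤ 2 := abs_le.mpr ⟨by linarith, ha2⟩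
      have h2 : |a-1| ≤ 1 := abs_le.mpr ⟨by linarith, by linarith⟩
      have heq : ‖a*((a-1) * (1+y)^(a-2)) + a*((a-1) * (1-y)^(a-2))‖
          = |a| * |a-1| * ((1+y)^(a-2) + (1-y)^(a-2)) := by
        rw [Real.norm_eq_abs, show a*((a-1) * (1+y)^(a-2)) + a*((a-1) * (1-y)^(a-2))
          = (a*(a-1)) * ((1+y)^(a-2) + (1-y)^(a-2)) by ring, abs_mul, abs_mul,
          abs_of_nonneg (by linarith : (0:ℝ) ≤ (1+y)^(a-2) + (1-y)^(a-2))]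
      rw [heq]
      have p1 : |a| * |a-1| ≤ 2 := by nlinarith [abs_nonneg a, abs_nonneg (a-1)]
      have p3 : (0:ℝ) ≤ (1+y)^(a-2) + (1-y)^(a-2) := by linarith
      calc |a| * |a-1| * ((1+y)^(a-2) + (1-y)^(a-2))
          ≤ 2 * ((1+y)^(a-2) + (1-y)^(a-2)) := mul_le_mul_of_nonneg_right p1 p3
        _ ≤ 10 := by linarith
    have hf'bound : ∀ u ∈ Set.Icc (0:ℝ) (1/2),
        |a * (1+u)^(a-1) - a * (1-u)^(a-1)| ≤ 10 * u := by
      intro u hu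
      have := (convex_Icc (0:ℝ) (1/2)).norm_image_sub_le_of_norm_hasDerivWithin_le
        (fun y hy => (hd2 y hy).hasDerivWithinAt) hbound''
        (Set.left_mem_Icc.mpr (by norm_num)) hu
      simpa [Real.norm_eq_abs, abs_of_nonneg hu.1] using this
    have hfb : |(1+x)^a + (1-x)^a - 2| ≤ 10 * (x * x) := by
      have hsub : Set.Icc (0:ℝ) x ⊆ Set.Icc (0:ℝ) (1/2) :=
        Set.Icc_subset_Icc le_rfl hx2.le
      have := (convex_Icc (0:ℝ) x).norm_image_sub_le_of_norm_hasDerivWithin_le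
        (f' := fun y => a * (1+y)^(a-1) - a * (1-y)^(a-1))
        (fun y hy => (hd1 y (hsub hy)).hasDerivWithinAt)
        (C := 10 * x)
        (fun y hy => by
          have h1 := hf'bound y (hsub hy)
          have h2 : (10:ℝ) * y ≤ 10 * x := by nlinarith [hy.2]
          simpa [Real.norm_eq_abs] using le_trans h1 h2)
        (Set.left_mem_Icc.mpr hx.le) (Set.right_mem_Icc.mpr hx.le)
      norm_num [Real.norm_eq_abs, abs_of_nonneg hx.le, mul_assoc] at this
      convert this using 2 <;> norm_num
    have habs1x : |1 - x| = 1 - x := abs_of_nonneg (by linarith)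
    rw [habs1x]
    nlinarith [hfb, sq_nonneg x, abs_le.mp hfb]

lemma fbmCov_symm (H x y : ℝ) : fbmCov H x y = fbmCov H y x := by
  unfold fbmCov; rw [abs_sub_comm]; ring

theorem stmt14 {Ω : Type*} [MeasurableSpace Ω] (P : Measure Ω) [IsProbabilityMeasure P]
    (H : ℝ) (hH : H ∈ Set.Ioo (0:ℝ) 1) (B : ℝ → Ω → ℝ) (hB : IsFBM1 H P B) :
    ∃ C : ℝ, 0 < C ∧ ∀ ε : ℝ, 0 < ε → ∀ s t : ℝ, 0 ≤ s → s < t →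
      |∫ ω, ((B (t + ε) ω - B (t - ε) ω) / (2 * ε)) *
          ((B (s + ε) ω - B (s - ε) ω) / (2 * ε)) ∂P| ≤
        C * (t - s) ^ (2 * H - 2) := by
  obtain ⟨hH0, hH1⟩ := hH
  refine ⟨26, by norm_num, ?_⟩
  intro ε hε s t hs hst
  have hr : 0 < t - s := sub_pos.mpr hst
  have hrne : t - s ≠ 0 := ne_of_gt hr
  obtain ⟨hIX, hQX⟩ := sq_moment hB 4 ![t+ε, t-ε, s+ε, s-ε] ![1,-1,0,0]
  obtain ⟨hIY, hQY⟩ := sq_moment hB 4 ![t+ε, t-ε, s+ε, s-ε] ![0,0,1,-1]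
  obtain ⟨hIXY, hQXY⟩ := sq_moment hB 4 ![t+ε, t-ε, s+ε, s-ε] ![1,-1,1,-1]
  set X : Ω → ℝ := fun ω => B (t+ε) ω - B (t-ε) ω with hX
  set Y : Ω → ℝ := fun ω => B (s+ε) ω - B (s-ε) ω with hY
  have eX : (fun ω => (∑ i, (![(1:ℝ),-1,0,0]) i * B ((![t+ε, t-ε, s+ε, s-ε]) i) ω)^2)
      = fun ω => (X ω)^2 := by
    funext ω; rw [hX]; simp [Fin.sum_univ_four]; ring
  have eY : (fun ω => (∑ i, (![(0:ℝ),0,1,-1]) i * B ((![t+ε, t-ε, s+ε, s-ε]) i) ω)^2)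
      = fun ω => (Y ω)^2 := by
    funext ω; rw [hY]; simp [Fin.sum_univ_four]; ring
  have eXY : (fun ω => (∑ i, (![(1:ℝ),-1,1,-1]) i * B ((![t+ε, t-ε, s+ε, s-ε]) i) ω)^2)
      = fun ω => (X ω + Y ω)^2 := by
    funext ω; rw [hX, hY]; simp [Fin.sum_univ_four]; ring
  rw [eX] at hIX hQX
  rw [eY] at hIY hQY
  rw [eXY] at hIXY hQXY
  have hQcomb : (∑ i, ∑ i', (![(1:ℝ),-1,1,-1]) i * (![(1:ℝ),-1,1,-1]) i'
        * fbmCov H ((![t+ε, t-ε, s+ε, s-ε]) i) ((![t+ε, t-ε, s+ε, s-ε]) i'))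
      - (∑ i, ∑ i', (![(1:ℝ),-1,0,0]) i * (![(1:ℝ),-1,0,0]) i'
        * fbmCov H ((![t+ε, t-ε, s+ε, s-ε]) i) ((![t+ε, t-ε, s+ε, s-ε]) i'))
      - (∑ i, ∑ i', (![(0:ℝ),0,1,-1]) i * (![(0:ℝ),0,1,-1]) i'
        * fbmCov H ((![t+ε, t-ε, s+ε, s-ε]) i) ((![t+ε, t-ε, s+ε, s-ε]) i'))
      = 2 * (fbmCov H (t+ε) (s+ε) - fbmCov H (t+ε) (s-ε) - fbmCov H (t-ε) (s+ε)
        + fbmCov H (t-ε) (s-ε)) := by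
    simp [Fin.sum_univ_four]
    rw [fbmCov_symm H (s+ε) (t+ε), fbmCov_symm H (s-ε) (t+ε),
      fbmCov_symm H (s+ε) (t-ε), fbmCov_symm H (s-ε) (t-ε)]
    ring
  have hprod : (fun ω => X ω * Y ω) = fun ω => ((X ω + Y ω)^2 - (X ω)^2 - (Y ω)^2)/2 := by
    funext ω; ring
  have hEXY : ∫ ω, X ω * Y ω ∂P = fbmCov H (t+ε) (s+ε) - fbmCov H (t+ε) (s-ε)
      - fbmCov H (t-ε) (s+ε) + fbmCov H (t-ε) (s-ε) := by
    have i1 : Integrable (fun ω => (X ω + Y ω)^2 - X ω^2) P := hIXY.sub hIX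
    rw [hprod, integral_div, integral_sub i1 hIY, integral_sub hIXY hIX,
      hQX, hQY, hQXY]
    linarith [hQcomb]
  have hval : fbmCov H (t+ε) (s+ε) - fbmCov H (t+ε) (s-ε) - fbmCov H (t-ε) (s+ε)
      + fbmCov H (t-ε) (s-ε)
      = ((t-s+2*ε)^(2*H) + |t-s-2*ε|^(2*H) - 2*(t-s)^(2*H))/2 := by
    unfold fbmCov
    rw [show t+ε-(s+ε) = t-s by ring, show t+ε-(s-ε) = t-s+2*ε by ring,
        show t-ε-(s+ε) = t-s-2*ε by ring, show t-ε-(s-ε) = t-s by ring,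
        abs_of_pos hr, abs_of_pos (by linarith : (0:ℝ) < t-s+2*ε)]
    ring
  have hintegrand : (fun ω => ((B (t+ε) ω - B (t-ε) ω)/(2*ε)) * ((B (s+ε) ω - B (s-ε) ω)/(2*ε)))
      = fun ω => (1/(2*ε)^2) * (X ω * Y ω) := by
    funext ω; rw [hX, hY]; ring
  rw [hintegrand, integral_const_mul, hEXY, hval]
  -- now pure arithmetic
  have h2H0 : (0:ℝ) < 2*H := by linarith
  have h2H2 : 2*H ≤ 2 := by linarith
  have hx : 0 < 2*ε/(t-s) := by positivity
  have hkey := key_analytic h2H0 h2H2 hx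
  have e3 : (t-s+2*ε)^(2*H) = (t-s)^(2*H) * (1+2*ε/(t-s))^(2*H) := by
    rw [← Real.mul_rpow hr.le (by positivity)]
    congr 1; field_simp
  have e4 : |t-s-2*ε|^(2*H) = (t-s)^(2*H) * |1-2*ε/(t-s)|^(2*H) := by
    rw [show t-s-2*ε = (t-s)*(1-2*ε/(t-s)) by field_simp, abs_mul, abs_of_pos hr,
      Real.mul_rpow hr.le (abs_nonneg _)]
  have e5 : (t-s+2*ε)^(2*H) + |t-s-2*ε|^(2*H) - 2*(t-s)^(2*H)
      = (t-s)^(2*H) * ((1+2*ε/(t-s))^(2*H) + |1-2*ε/(t-s)|^(2*H) - 2) := by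
    rw [e3, e4]; ring
  have e6 : |(t-s)^(2*H) * ((1+2*ε/(t-s))^(2*H) + |1-2*ε/(t-s)|^(2*H) - 2)|
      ≤ (t-s)^(2*H) * (26 * (2*ε/(t-s))^2) := by
    rw [abs_mul, abs_of_nonneg (Real.rpow_nonneg hr.le _)]
    exact mul_le_mul_of_nonneg_left hkey (Real.rpow_nonneg hr.le _)
  have e8 : (t-s)^(2*H) / (t-s)^2 = (t-s)^(2*H-2) := by
    rw [Real.rpow_sub hr, Real.rpow_two]
  have hNbound : |(t-s+2*ε)^(2*H) + |t-s-2*ε|^(2*H) - 2*(t-s)^(2*H)|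
      ≤ 26*(2*ε)^2*((t-s)^(2*H-2)) := by
    calc |(t-s+2*ε)^(2*H) + |t-s-2*ε|^(2*H) - 2*(t-s)^(2*H)|
        = |(t-s)^(2*H) * ((1+2*ε/(t-s))^(2*H) + |1-2*ε/(t-s)|^(2*H) - 2)| := by rw [e5]
      _ ≤ (t-s)^(2*H) * (26 * (2*ε/(t-s))^2) := e6
      _ = 26*(2*ε)^2*((t-s)^(2*H) / (t-s)^2) := by field_simp
      _ = 26*(2*ε)^2*((t-s)^(2*H-2)) := by rw [e8]
  have habs : |(1/(2*ε)^2) * (((t-s+2*ε)^(2*H) + |t-s-2*ε|^(2*H) - 2*(t-s)^(2*H))/2)|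
      = |(t-s+2*ε)^(2*H) + |t-s-2*ε|^(2*H) - 2*(t-s)^(2*H)| / (2*(2*ε)^2) := by
    rw [abs_mul, abs_of_pos (show (0:ℝ) < 1/(2*ε)^2 by positivity), abs_div, abs_two]
    ring
  rw [habs]
  have hRnn : 0 ≤ (t-s)^(2*H-2) := Real.rpow_nonneg hr.le _
  calc |(t-s+2*ε)^(2*H) + |t-s-2*ε|^(2*H) - 2*(t-s)^(2*H)| / (2*(2*ε)^2)
      ≤ 13 * ((t-s)^(2*H-2)) := by
        rw [div_le_iff₀ (by positivity)]
        calc |(t-s+2*ε)^(2*H) + |t-s-2*ε|^(2*H) - 2*(t-s)^(2*H)|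
            ≤ 26*(2*ε)^2*((t-s)^(2*H-2)) := hNbound
          _ = 13 * ((t-s)^(2*H-2)) * (2*(2*ε)^2) := by ring
    _ ≤ 26 * (t-s)^(2*H-2) := by linarith
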